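/- If f : ℝ → ℝ is continuous with f(0) = 0 and t ↦ f(t)/|t| is strictly increasing on ℝ \ {0}, then the function t ↦ F(t)/t² is strictly increasing on (0, ∞) and strictly decreasing on (−∞, 0), where F(t) = ∫₀ᵗ f(s) ds. -/

import Mathlib

open Set intervalIntegral

theorem stmt1 (f : ℝ → ℝ) (hf : Continuous f) (hf0 : f 0 = 0)
    (hmono : StrictMonoOn (fun t => f t / |t|) {t : ℝ | t ≠ 0}) :
    StrictMonoOn (fun t => (∫ s in (0:ℝ)..t, f s) / t ^ 2) (Set.Ioi (0:ℝ)) ∧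
    StrictAntiOn (fun t => (∫ s in (0:ℝ)..t, f s) / t ^ 2) (Set.Iio (0:ℝ)) := by
  set F : ℝ → ℝ := fun t => ∫ s in (0:ℝ)..t, f s with hFdef
  -- key inequality
  have key : ∀ t : ℝ, t ≠ 0 → 2 * F t < f t * t := by
    intro t ht
    rcases ht.lt_or_gt with htneg | htpos
    · -- t < 0
      have h1 : (∫ s in t..(0:ℝ), f t / t * s) < ∫ s in t..(0:ℝ), f s := by
        apply intervalIntegral.integral_lt_integral_of_continuousOn_of_le_of_exists_lt htneg
        · exact (continuous_const.mul continuous_id).continuousOn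
        · exact hf.continuousOn
        · intro x hx
          rcases eq_or_lt_of_le hx.2 with h0 | h0
          · simp [h0, hf0]
          · have hxne : x ≠ 0 := ne_of_lt h0
            have := hmono (show t ∈ {t : ℝ | t ≠ 0} from ne_of_lt htneg) hxne hx.1
            simp only [abs_of_neg htneg, abs_of_neg h0] at this
            have h2 : f t / -t * -x < f x / -x * -x := by
              apply mul_lt_mul_of_pos_right this (by linarith)
            rw [div_mul_cancel₀ _ (by linarith : (-x : ℝ) ≠ 0)] at h2
            have : f t / t * x = f t / -t * -x := by
              field_simp
            linarith [h2, this.ge, this.le]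
        · refine ⟨t / 2, ⟨by linarith, by linarith⟩, ?_⟩
          have hxne : t / 2 ≠ 0 := by intro h; nlinarith [h]
          have h0 : t / 2 < 0 := by linarith
          have := hmono (show t ∈ {t : ℝ | t ≠ 0} from ne_of_lt htneg) hxne (by linarith)
          simp only [abs_of_neg htneg, abs_of_neg h0] at this
          have h2 : f t / -t * -(t/2) < f (t/2) / -(t/2) * -(t/2) := by
            apply mul_lt_mul_of_pos_right this (by linarith)
          rw [div_mul_cancel₀ _ (by intro h; nlinarith [h] : (-(t/2) : ℝ) ≠ 0)] at h2
          have h3 : f t / t * (t/2) = f t / -t * -(t/2) := by field_simp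
          linarith
      have h2 : (∫ s in t..(0:ℝ), f t / t * s) = -(f t * t) / 2 := by
        rw [intervalIntegral.integral_const_mul, integral_id]
        field_simp
        ring
      have h3 : (∫ s in t..(0:ℝ), f s) = - F t := by
        rw [hFdef]
        simp [intervalIntegral.integral_symm t 0]
      rw [h2, h3] at h1
      linarith
    · -- t > 0
      have h1 : (∫ s in (0:ℝ)..t, f s) < ∫ s in (0:ℝ)..t, f t / t * s := by
        apply intervalIntegral.integral_lt_integral_of_continuousOn_of_le_of_exists_lt htpos
        · exact hf.continuousOn
        · exact (continuous_const.mul continuous_id).continuousOn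
        · intro x hx
          rcases eq_or_lt_of_le hx.2 with h0 | h0
          · rw [h0, div_mul_cancel₀ _ (ne_of_gt htpos)]
          · have hxne : x ≠ 0 := ne_of_gt hx.1
            have := hmono hxne (show t ∈ {t : ℝ | t ≠ 0} from ne_of_gt htpos) h0
            simp only [abs_of_pos hx.1, abs_of_pos htpos] at this
            have h2 : f x / x * x < f t / t * x := mul_lt_mul_of_pos_right this hx.1
            rw [div_mul_cancel₀ _ hxne] at h2
            linarith
        · refine ⟨t / 2, ⟨by linarith, by linarith⟩, ?_⟩
          have h0 : (0:ℝ) < t / 2 := by linarith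
          have := hmono (show t/2 ∈ {t : ℝ | t ≠ 0} from ne_of_gt h0)
            (show t ∈ {t : ℝ | t ≠ 0} from ne_of_gt htpos) (by linarith)
          simp only [abs_of_pos h0, abs_of_pos htpos] at this
          have h2 : f (t/2) / (t/2) * (t/2) < f t / t * (t/2) :=
            mul_lt_mul_of_pos_right this h0
          rw [div_mul_cancel₀ _ (ne_of_gt h0)] at h2
          linarith
      have h2 : (∫ s in (0:ℝ)..t, f t / t * s) = f t * t / 2 := by
        rw [intervalIntegral.integral_const_mul, integral_id]
        field_simp
        ring
      rw [h2] at h1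
      linarith
  -- derivative of F
  have hF : ∀ x : ℝ, HasDerivAt F (f x) x := by
    intro x
    exact intervalIntegral.integral_hasDerivAt_right (hf.intervalIntegrable 0 x)
      (hf.stronglyMeasurableAtFilter _ _) hf.continuousAt
  have hG : ∀ x : ℝ, x ≠ 0 →
      HasDerivAt (fun t => F t / t ^ 2) ((f x * x ^ 2 - F x * (2 * x)) / (x ^ 2) ^ 2) x := by
    intro x hx
    have h : HasDerivAt (fun t => F t / t ^ 2) _ x := (hF x).div (hasDerivAt_pow 2 x) (pow_ne_zero 2 hx)
    convert h using 1
    ring_nf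
  have hcont : ∀ x : ℝ, x ≠ 0 → ContinuousAt (fun t => F t / t ^ 2) x := by
    intro x hx
    exact (hG x hx).continuousAt
  have hderiv : ∀ x : ℝ, x ≠ 0 →
      deriv (fun t => F t / t ^ 2) x = (x * (f x * x - 2 * F x)) / (x ^ 2) ^ 2 := by
    intro x hx
    rw [(hG x hx).deriv]
    ring_nf
  constructor
  · apply strictMonoOn_of_deriv_pos (convex_Ioi 0)
    · exact fun x hx => (hcont x (ne_of_gt hx)).continuousWithinAt
    · intro x hx
      rw [interior_Ioi] at hx
      rw [hderiv x (ne_of_gt hx)]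
      apply div_pos
      · exact mul_pos hx (by linarith [key x (ne_of_gt hx)])
      · have hx' : (0:ℝ) < x := hx
        positivity
  · apply strictAntiOn_of_deriv_neg (convex_Iio 0)
    · exact fun x hx => (hcont x (ne_of_lt hx)).continuousWithinAt
    · intro x hx
      rw [interior_Iio] at hx
      rw [hderiv x (ne_of_lt hx)]
      apply div_neg_of_neg_of_pos
      · exact mul_neg_of_neg_of_pos hx (by linarith [key x (ne_of_lt hx)])
      · have hx' : x ≠ 0 := ne_of_lt hx
        positivity
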